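/- Let R = I - Pᵀ where P is the tridiagonal matrix with P_{i(i+1)} = P_{i(i-1)} = 1/2 for 2 ≤ i ≤ d-1, P_{12} = P_{d(d-1)} = 1/2, and P_{ij}=0 otherwise. Then the row sums of R^{-1} satisfy (R^{-1} 𝟏)_i = i(d+1-i) for every 1 ≤ i ≤ d. -/

import Mathlib

open Matrix

noncomputable def rankP (d : ℕ) : Matrix (Fin d) (Fin d) ℝ :=
  Matrix.of fun i j => if i.val + 1 = j.val ∨ j.val + 1 = i.val then (1 : ℝ) / 2 else 0

lemma sum_ite_val {d : ℕ} (c : ℕ) (f : Fin d → ℝ) :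
    ∑ k : Fin d, (if k.val = c then f k else 0) = if h : c < d then f ⟨c, h⟩ else 0 := by
  split_ifs with h
  · rw [Finset.sum_eq_single (⟨c, h⟩ : Fin d)]
    · simp
    · intro k _ hk
      rw [if_neg]
      exact fun hc => hk (Fin.ext hc)
    · simp
  · refine Finset.sum_eq_zero fun k _ => if_neg fun hc => ?_
    have := k.isLt; omega

lemma Rrow {d : ℕ} (i : Fin d) (g : Fin d → ℝ) :
    ∑ k : Fin d, (((1 : Matrix (Fin d) (Fin d) ℝ) - (rankP d)ᵀ) i k * g k)
      = g i - (1/2) * ((if h : i.val + 1 < d then g ⟨i.val + 1, h⟩ else 0)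
          + (if h : 1 ≤ i.val then g ⟨i.val - 1, by omega⟩ else 0)) := by
  have hterm : ∀ k : Fin d, (((1 : Matrix (Fin d) (Fin d) ℝ) - (rankP d)ᵀ) i k * g k)
      = (if k.val = i.val then g k else 0)
        - ((1/2) * (if k.val = i.val + 1 then g k else 0)
           + (1/2) * (if k.val + 1 = i.val then g k else 0)) := by
    intro k
    simp only [Matrix.sub_apply, Matrix.one_apply, Matrix.transpose_apply, rankP,
      Matrix.of_apply, Fin.ext_iff]
    split_ifs <;> (first | (exfalso; omega) | ring)
  rw [Finset.sum_congr rfl (fun k _ => hterm k), Finset.sum_sub_distrib,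
    Finset.sum_add_distrib, ← Finset.mul_sum, ← Finset.mul_sum]
  rw [sum_ite_val i.val g, dif_pos i.isLt]
  have h2 : ∑ k : Fin d, (if k.val = i.val + 1 then g k else 0)
      = if h : i.val + 1 < d then g ⟨i.val + 1, h⟩ else 0 := sum_ite_val _ g
  rw [h2]
  simp only [Fin.eta]
  by_cases h1 : 1 ≤ i.val
  · have h3 : ∑ k : Fin d, (if k.val + 1 = i.val then g k else 0)
        = g ⟨i.val - 1, by omega⟩ := by
      rw [Finset.sum_congr rfl (fun k _ => by
        rw [show (if k.val + 1 = i.val then g k else 0)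
            = (if k.val = i.val - 1 then g k else 0) from if_congr (by omega) rfl rfl]),
        sum_ite_val (i.val - 1) g, dif_pos (by omega : i.val - 1 < d)]
    rw [h3, dif_pos h1]
    ring
  · have h3 : ∑ k : Fin d, (if k.val + 1 = i.val then g k else 0) = 0 :=
      Finset.sum_eq_zero fun k _ => if_neg (by omega)
    rw [h3, dif_neg h1]
    ring

noncomputable def rankM (d : ℕ) : Matrix (Fin d) (Fin d) ℝ :=
  Matrix.of fun i j => if i.val ≤ j.val
    then 2 * ((i.val : ℝ) + 1) * ((d : ℝ) - j.val) / ((d : ℝ) + 1)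
    else 2 * ((j.val : ℝ) + 1) * ((d : ℝ) - i.val) / ((d : ℝ) + 1)

lemma rankRM (d : ℕ) : ((1 : Matrix (Fin d) (Fin d) ℝ) - (rankP d)ᵀ) * rankM d = 1 := by
  ext i j
  rw [Matrix.mul_apply, Rrow i (fun k => rankM d k j), Matrix.one_apply]
  have ha : i.val < d := i.isLt
  have hb : j.val < d := j.isLt
  have hD : ((d : ℝ) + 1) ≠ 0 := by positivity
  simp only [rankM, Matrix.of_apply]
  by_cases h2 : i.val + 1 < d <;> by_cases h1 : 1 ≤ i.val
  · -- interior
    rw [dif_pos h2, dif_pos h1]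
    have e1 : ((i.val - 1 : ℕ) : ℝ) = (i.val : ℝ) - 1 := by
      rw [Nat.cast_sub h1, Nat.cast_one]
    rcases (by omega : j.val = i.val ∨ j.val + 1 = i.val ∨ i.val + 1 ≤ j.val ∨ j.val + 2 ≤ i.val) with hb' | hb' | hb' | hb'
    · rw [if_pos (by omega), if_neg (by omega), if_pos (by omega), if_pos (Fin.ext hb'.symm)]
      have eb : (j.val : ℝ) = (i.val : ℝ) := by exact_mod_cast hb'
      simp only [e1, eb]
      push_cast
      field_simp
      ring
    · rw [if_neg (by omega), if_neg (by omega), if_pos (by omega),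
        if_neg (fun h => by have := Fin.val_eq_of_eq h; omega)]
      have eb : (j.val : ℝ) = (i.val : ℝ) - 1 := by
        have : ((j.val + 1 : ℕ) : ℝ) = ((i.val : ℕ) : ℝ) := by exact_mod_cast hb'
        push_cast at this; linarith
      simp only [e1, eb]
      push_cast
      field_simp
      ring
    · rw [if_pos (by omega), if_pos (by omega), if_pos (by omega),
        if_neg (fun h => by have := Fin.val_eq_of_eq h; omega)]
      simp only [e1]
      push_cast
      field_simp
      ring
    · rw [if_neg (by omega), if_neg (by omega), if_neg (by omega),
        if_neg (fun h => by have := Fin.val_eq_of_eq h; omega)]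
      simp only [e1]
      push_cast
      field_simp
      ring
  · -- top row, d ≥ 2
    have ha0 : i.val = 0 := by omega
    rw [dif_pos h2, dif_neg h1]
    rcases (by omega : j.val = 0 ∨ 1 ≤ j.val) with hb' | hb'
    · rw [if_pos (by omega), if_neg (by omega), if_pos (Fin.ext (by omega))]
      have eb : (j.val : ℝ) = 0 := by exact_mod_cast hb'
      have ea : (i.val : ℝ) = 0 := by exact_mod_cast ha0
      simp only [eb, ea]
      push_cast [ha0]
      field_simp
      ring
    · rw [if_pos (by omega), if_pos (by omega),
        if_neg (fun h => by have := Fin.val_eq_of_eq h; omega)]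
      have ea : (i.val : ℝ) = 0 := by exact_mod_cast ha0
      simp only [ea]
      push_cast [ha0]
      field_simp
      ring
  · -- bottom row, d ≥ 2
    have hda : i.val + 1 = d := by omega
    have eD : (d : ℝ) = (i.val : ℝ) + 1 := by exact_mod_cast hda.symm
    have e1 : ((i.val - 1 : ℕ) : ℝ) = (i.val : ℝ) - 1 := by
      rw [Nat.cast_sub h1, Nat.cast_one]
    rw [dif_neg h2, dif_pos h1]
    rcases (by omega : j.val = i.val ∨ j.val + 1 = i.val ∨ j.val + 2 ≤ i.val) with hb' | hb' | hb'
    · rw [if_pos (by omega), if_pos (by omega), if_pos (Fin.ext hb'.symm)]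
      have eb : (j.val : ℝ) = (i.val : ℝ) := by exact_mod_cast hb'
      simp only [e1, eb, eD]
      field_simp
      ring
    · rw [if_neg (by omega), if_pos (by omega),
        if_neg (fun h => by have := Fin.val_eq_of_eq h; omega)]
      have eb : (j.val : ℝ) = (i.val : ℝ) - 1 := by
        have : ((j.val + 1 : ℕ) : ℝ) = ((i.val : ℕ) : ℝ) := by exact_mod_cast hb'
        push_cast at this; linarith
      simp only [e1, eb, eD]
      field_simp
      ring
    · rw [if_neg (by omega), if_neg (by omega),
        if_neg (fun h => by have := Fin.val_eq_of_eq h; omega)]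
      simp only [e1, eD]
      field_simp
      ring
  · -- d = 1
    have hd1 : d = 1 := by omega
    have ha0 : i.val = 0 := by omega
    have hb0 : j.val = 0 := by omega
    rw [dif_neg h2, dif_neg h1, if_pos (by omega), if_pos (Fin.ext (by omega))]
    have eD : (d : ℝ) = 1 := by exact_mod_cast hd1
    have ea : (i.val : ℝ) = 0 := by exact_mod_cast ha0
    have eb : (j.val : ℝ) = 0 := by exact_mod_cast hb0
    rw [eD, ea, eb]
    norm_num

theorem rank_R_inv_rowsum (d : ℕ) (hd : 1 ≤ d) (i : Fin d) :
    (((1 : Matrix (Fin d) (Fin d) ℝ) - (rankP d)ᵀ)⁻¹ *ᵥ (fun _ => (1 : ℝ))) i =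
      (i.val + 1) * ((d : ℝ) + 1 - (i.val + 1)) := by
  set R := (1 : Matrix (Fin d) (Fin d) ℝ) - (rankP d)ᵀ with hR
  have hRM : R * rankM d = 1 := rankRM d
  have hdet : IsUnit R.det := by
    apply IsUnit.of_mul_eq_one (rankM d).det
    rw [← Matrix.det_mul, hRM, Matrix.det_one]
  set v : Fin d → ℝ := fun k => ((k.val : ℝ) + 1) * ((d : ℝ) - k.val) with hv
  have hRv : R *ᵥ v = fun _ => (1 : ℝ) := by
    funext k
    have : (R *ᵥ v) k = ∑ m : Fin d, R k m * v m := rfl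
    rw [this, Rrow k v]
    have ha : k.val < d := k.isLt
    by_cases h2 : k.val + 1 < d <;> by_cases h1 : 1 ≤ k.val
    · rw [dif_pos h2, dif_pos h1]
      have e1 : ((k.val - 1 : ℕ) : ℝ) = (k.val : ℝ) - 1 := by
        rw [Nat.cast_sub h1, Nat.cast_one]
      simp only [hv, e1]
      push_cast
      ring
    · rw [dif_pos h2, dif_neg h1]
      have ea : (k.val : ℝ) = 0 := by exact_mod_cast (by omega : k.val = 0)
      simp only [hv]
      push_cast
      rw [ea]
      ring
    · rw [dif_neg h2, dif_pos h1]
      have e1 : ((k.val - 1 : ℕ) : ℝ) = (k.val : ℝ) - 1 := by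
        rw [Nat.cast_sub h1, Nat.cast_one]
      have eD : (d : ℝ) = (k.val : ℝ) + 1 := by exact_mod_cast (by omega : d = k.val + 1)
      simp only [hv, e1, eD]
      ring
    · rw [dif_neg h2, dif_neg h1]
      have ea : (k.val : ℝ) = 0 := by exact_mod_cast (by omega : k.val = 0)
      have eD : (d : ℝ) = 1 := by exact_mod_cast (by omega : d = 1)
      simp only [hv, ea, eD]
      norm_num
  have : (fun _ => (1 : ℝ)) = R *ᵥ v := hRv.symm
  rw [this, Matrix.mulVec_mulVec, Matrix.nonsing_inv_mul R hdet, Matrix.one_mulVec]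
  simp only [hv]
  ring
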